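/- Let n ≥ 2, 2 < p < ∞, ξ = n + p − 4, z ∈ ℝⁿ, a, b > 0 and c ∈ ℝ, and define w(x) = −a|x−z|² − b|x−z|^{−ξ} + c for x ∈ ℝⁿ, x ≠ z. Then w satisfies the dominative p-Laplace equation with constant right-hand side: for every x ≠ z, Δw(x) + (p−2) · sup_{|σ|=1} ⟨D²w(x)σ, σ⟩ = −2a(n + p − 2). -/

import Mathlib

open MeasureTheory Metric Set

set_option maxHeartbeats 1000000 in
/-- **The barrier solves the dominative p-Laplace equation with constant right-hand side.**
For `ξ = n + p − 4` and `w(x) = −a|x−z|² − b|x−z|^{−ξ} + c`, for all `x ≠ z` one has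
`Δw(x) + (p−2) sup_{|σ|=1} ⟨D²w(x)σ, σ⟩ = −2a(n+p−2)`. -/
theorem barrier_dominative_pLaplacian
    (n : ℕ) (hn : 2 ≤ n) (p : ℝ) (hp : 2 < p)
    (z : EuclideanSpace ℝ (Fin n)) (a b c : ℝ) (ha : 0 < a) (hb : 0 < b)
    (x : EuclideanSpace ℝ (Fin n)) (hx : x ≠ z) :
    (∑ i : Fin n,
      fderiv ℝ (fderiv ℝ (fun x : EuclideanSpace ℝ (Fin n) =>
        -a * ‖x - z‖ ^ 2 - b * ‖x - z‖ ^ (-((n : ℝ) + p - 4)) + c)) x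
        (EuclideanSpace.single i 1) (EuclideanSpace.single i 1)) +
    (p - 2) *
      (⨆ σ : sphere (0 : EuclideanSpace ℝ (Fin n)) 1,
        fderiv ℝ (fderiv ℝ (fun x : EuclideanSpace ℝ (Fin n) =>
          -a * ‖x - z‖ ^ 2 - b * ‖x - z‖ ^ (-((n : ℝ) + p - 4)) + c)) x
          (σ : EuclideanSpace ℝ (Fin n)) (σ : EuclideanSpace ℝ (Fin n))) =
      -2 * a * ((n : ℝ) + p - 2) := by
  classical
  have hn2 : (2:ℝ) ≤ (n:ℝ) := by exact_mod_cast hn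
  set s : ℝ := -((n : ℝ) + p - 4) with hs_def
  have hs_neg : s < 0 := by rw [hs_def]; linarith
  set t : ℝ := s / 2 with ht_def
  have ht2 : 2 * t = s := by rw [ht_def]; ring
  have hst : 2 * t + ((n:ℝ) + p - 4) = 0 := by rw [ht2, hs_def]; ring
  have ht_neg : t < 0 := by rw [ht_def]; linarith
  set v : EuclideanSpace ℝ (Fin n) := x - z with hv_def
  have hvne : v ≠ 0 := sub_ne_zero.mpr hx
  have hr_pos : 0 < ‖v‖ := norm_pos_iff.mpr hvne
  set φx : ℝ := ‖v‖ ^ 2 with hφ_def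
  have hφpos : (0:ℝ) < φx := by rw [hφ_def]; positivity
  -- rewrite the rpow of the norm as an rpow of the squared norm
  have hWF : (fun y : EuclideanSpace ℝ (Fin n) => -a * ‖y - z‖ ^ 2 - b * ‖y - z‖ ^ s + c)
      = (fun y : EuclideanSpace ℝ (Fin n) =>
          -a * ‖y - z‖ ^ 2 - b * ((‖y - z‖ ^ 2 : ℝ)) ^ t + c) := by
    funext y
    have h1 : ((‖y - z‖ ^ 2 : ℝ)) ^ t = ‖y - z‖ ^ s := by
      rw [← Real.rpow_natCast ‖y - z‖ 2, ← Real.rpow_mul (norm_nonneg _)]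
      norm_num
      rw [ht2]
    rw [h1]
  rw [hWF]
  set k₂ : ℝ := -2*a - 2*b*t*φx^(t-1) with hk2_def
  set k₁ : ℝ := -4*b*t*(t-1)*φx^(t-2) with hk1_def
  -- first derivative
  set G : EuclideanSpace ℝ (Fin n) → (EuclideanSpace ℝ (Fin n) →L[ℝ] ℝ) :=
    fun y => (-2*a - 2*b*t*((‖y - z‖ ^ 2 : ℝ))^(t-1)) • innerSL ℝ (y - z) with hG_def
  have hnsq : ∀ y : EuclideanSpace ℝ (Fin n),
      HasFDerivAt (fun w : EuclideanSpace ℝ (Fin n) => ‖w - z‖ ^ 2)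
        (2 • innerSL ℝ (y - z)) y := by
    intro y
    simpa using ((hasFDerivAt_id y).sub_const z).norm_sq
  have hF : ∀ y : EuclideanSpace ℝ (Fin n), y ≠ z →
      HasFDerivAt (fun y : EuclideanSpace ℝ (Fin n) =>
        -a * ‖y - z‖ ^ 2 - b * ((‖y - z‖ ^ 2 : ℝ)) ^ t + c) (G y) y := by
    intro y hy
    have hy0 : ‖y - z‖ ^ 2 ≠ 0 := pow_ne_zero _ (norm_ne_zero_iff.mpr (sub_ne_zero.mpr hy))
    have h2 := (hnsq y).rpow_const (p := t) (Or.inl hy0)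
    have h3 := (((hnsq y).const_mul (-a)).sub (h2.const_mul b)).add_const c
    refine h3.congr_fderiv ?_
    ext u
    simp only [hG_def, ContinuousLinearMap.sub_apply, ContinuousLinearMap.add_apply,
      ContinuousLinearMap.smul_apply, innerSL_apply_apply, smul_eq_mul, nsmul_eq_mul, Nat.cast_ofNat]
    ring
  have h_ev : (fderiv ℝ (fun y : EuclideanSpace ℝ (Fin n) =>
      -a * ‖y - z‖ ^ 2 - b * ((‖y - z‖ ^ 2 : ℝ)) ^ t + c)) =ᶠ[nhds x] G :=
    Filter.eventuallyEq_of_mem (isOpen_compl_singleton.mem_nhds hx)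
      (fun y hy => (hF y hy).fderiv)
  -- second derivative
  set L : EuclideanSpace ℝ (Fin n) →L[ℝ] (EuclideanSpace ℝ (Fin n) →L[ℝ] ℝ) := innerSL ℝ
    with hL_def
  set H : EuclideanSpace ℝ (Fin n) →L[ℝ] (EuclideanSpace ℝ (Fin n) →L[ℝ] ℝ) :=
    k₂ • L + (k₁ • innerSL ℝ v).smulRight (innerSL ℝ v) with hH_def
  have hG : HasFDerivAt G H x := by
    have hc : HasFDerivAt (fun y : EuclideanSpace ℝ (Fin n) =>
        -2*a - 2*b*t*((‖y - z‖ ^ 2 : ℝ))^(t-1)) (k₁ • innerSL ℝ v) x := by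
      have h2 := ((hnsq x).rpow_const (p := t - 1)
        (Or.inl (pow_ne_zero _ (norm_ne_zero_iff.mpr (sub_ne_zero.mpr hx)))))
      have h3 := (h2.const_mul (2*b*t)).const_sub (-2*a)
      refine h3.congr_fderiv ?_
      rw [show t - 1 - 1 = t - 2 by ring]
      ext u
      simp only [hk1_def, hv_def, hφ_def, hL_def, ContinuousLinearMap.neg_apply,
        ContinuousLinearMap.smul_apply, innerSL_apply_apply, smul_eq_mul,
        nsmul_eq_mul, Nat.cast_ofNat]
      ring
    have hlin : HasFDerivAt (fun y : EuclideanSpace ℝ (Fin n) => innerSL ℝ (y - z)) L x := by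
      have h2 := L.hasFDerivAt.comp x ((hasFDerivAt_id x).sub_const z)
      rw [ContinuousLinearMap.comp_id] at h2
      exact h2
    refine (hc.smul hlin).congr_fderiv ?_
    rw [hH_def]
  have hfd : fderiv ℝ (fderiv ℝ (fun y : EuclideanSpace ℝ (Fin n) =>
      -a * ‖y - z‖ ^ 2 - b * ((‖y - z‖ ^ 2 : ℝ)) ^ t + c)) x = H := by
    rw [h_ev.fderiv_eq]; exact hG.fderiv
  rw [hfd]
  -- evaluate H
  have hHval : ∀ u u' : EuclideanSpace ℝ (Fin n),
      H u u' = k₂ * inner ℝ u u' + k₁ * (inner ℝ v u * inner ℝ v u') := by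
    intro u u'
    simp only [hH_def, ContinuousLinearMap.add_apply, ContinuousLinearMap.smul_apply,
      ContinuousLinearMap.smulRight_apply, hL_def, innerSL_apply_apply, smul_eq_mul]
    rw [show ((innerSL ℝ) u) u' = inner ℝ u u' from rfl]
    ring
  -- the Laplacian part
  have hsum : ∑ i : Fin n, (v i) * (v i) = φx := by
    rw [hφ_def, EuclideanSpace.norm_sq_eq]
    simp [Real.norm_eq_abs, sq_abs, sq]
  have hLap : (∑ i : Fin n, H (EuclideanSpace.single i 1) (EuclideanSpace.single i 1))
      = (n : ℝ) * k₂ + k₁ * φx := by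
    have : ∀ i : Fin n, H (EuclideanSpace.single i 1) (EuclideanSpace.single i 1)
        = k₂ + k₁ * (v i * v i) := by
      intro i
      rw [hHval]
      have h1 : (inner ℝ v (EuclideanSpace.single i (1:ℝ)) : ℝ) = v i := by
        rw [EuclideanSpace.inner_single_right]; simp
      have h2 : (inner ℝ (EuclideanSpace.single i (1:ℝ)) (EuclideanSpace.single i (1:ℝ)) : ℝ)
          = 1 := by
        rw [EuclideanSpace.inner_single_right]; simp [EuclideanSpace.single_apply]
      rw [h1, h2]; ring
    rw [Finset.sum_congr rfl (fun i _ => this i), Finset.sum_add_distrib,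
      Finset.sum_const, ← Finset.mul_sum, hsum]
    simp [mul_comm]
  -- the sup part
  have hk1_neg : k₁ < 0 := by
    rw [hk1_def]
    have h1 : (0:ℝ) < φx ^ (t-2) := Real.rpow_pos_of_pos hφpos _
    have h2 : 0 < t * (t - 1) := mul_pos_of_neg_of_neg ht_neg (by linarith)
    nlinarith [mul_pos (mul_pos hb h2) h1]
  have hub : ∀ σ : sphere (0 : EuclideanSpace ℝ (Fin n)) 1,
      H (σ : EuclideanSpace ℝ (Fin n)) (σ : EuclideanSpace ℝ (Fin n)) ≤ k₂ := by
    intro σ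
    rw [hHval]
    have hσ : ‖(σ : EuclideanSpace ℝ (Fin n))‖ = 1 :=
      mem_sphere_zero_iff_norm.mp σ.2
    have h1 : (inner ℝ (σ : EuclideanSpace ℝ (Fin n)) (σ : EuclideanSpace ℝ (Fin n)) : ℝ) = 1 := by
      rw [real_inner_self_eq_norm_sq, hσ]; norm_num
    rw [h1]
    have h3 : k₁ * ((inner ℝ v (σ : EuclideanSpace ℝ (Fin n)) : ℝ) *
        (inner ℝ v (σ : EuclideanSpace ℝ (Fin n)) : ℝ)) ≤ 0 :=
      mul_nonpos_iff.mpr (Or.inr ⟨hk1_neg.le, mul_self_nonneg _⟩)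
    linarith
  -- orthogonal unit vector
  obtain ⟨w, hw_mem, hw_ne⟩ : ∃ w ∈ (ℝ ∙ v)ᗮ, w ≠ 0 := by
    apply Submodule.exists_mem_ne_zero_of_ne_bot
    intro hbot
    have h1 : Module.finrank ℝ (ℝ ∙ v) = 1 := finrank_span_singleton hvne
    have h2 := Submodule.finrank_add_finrank_orthogonal (K := (ℝ ∙ v))
    rw [hbot, h1, finrank_euclideanSpace_fin] at h2
    simp at h2
    omega
  have hw_orth : (inner ℝ v w : ℝ) = 0 :=
    (Submodule.mem_orthogonal _ _).mp hw_mem v (Submodule.mem_span_singleton_self v)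
  have hw_pos : 0 < ‖w‖ := norm_pos_iff.mpr hw_ne
  set σ₀ : EuclideanSpace ℝ (Fin n) := ‖w‖⁻¹ • w with hσ₀_def
  have hσ₀_norm : ‖σ₀‖ = 1 := by
    rw [hσ₀_def, norm_smul, norm_inv, norm_norm, inv_mul_cancel₀ hw_pos.ne']
  have hσ₀_orth : (inner ℝ v σ₀ : ℝ) = 0 := by
    rw [hσ₀_def, inner_smul_right, hw_orth]; ring
  haveI : Nonempty (sphere (0 : EuclideanSpace ℝ (Fin n)) 1) :=
    ⟨⟨σ₀, mem_sphere_zero_iff_norm.mpr hσ₀_norm⟩⟩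
  have hSup : (⨆ σ : sphere (0 : EuclideanSpace ℝ (Fin n)) 1,
      H (σ : EuclideanSpace ℝ (Fin n)) (σ : EuclideanSpace ℝ (Fin n))) = k₂ := by
    apply le_antisymm
    · exact ciSup_le hub
    · have hbdd : BddAbove (Set.range (fun σ : sphere (0 : EuclideanSpace ℝ (Fin n)) 1 =>
          H (σ : EuclideanSpace ℝ (Fin n)) (σ : EuclideanSpace ℝ (Fin n)))) := by
        refine ⟨k₂, ?_⟩
        rintro y ⟨σ, rfl⟩
        exact hub σ
      have hle := le_ciSup hbdd (⟨σ₀, mem_sphere_zero_iff_norm.mpr hσ₀_norm⟩ :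
        sphere (0 : EuclideanSpace ℝ (Fin n)) 1)
      have hval : H σ₀ σ₀ = k₂ := by
        rw [hHval, hσ₀_orth, real_inner_self_eq_norm_sq, hσ₀_norm]
        norm_num
      calc k₂ = H σ₀ σ₀ := hval.symm
        _ ≤ _ := hle
  rw [hLap, hSup]
  -- final algebra
  have hpow : φx ^ (t-1) = φx ^ (t-2) * φx := by
    rw [show t - 1 = (t-2) + 1 by ring, Real.rpow_add_one hφpos.ne']
  rw [hk2_def, hk1_def, hpow]
  linear_combination (-2*b*t*(φx ^ (t-2))*φx) * hst
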